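/- Let F : ℝⁿ → ℝ be twice continuously differentiable with L₂-Lipschitz Hessian, and let α ≥ L₂ with α > 0. Fix x ∈ ℝⁿ, g ∈ ℝⁿ, and a symmetric matrix Ĥ ∈ ℝ^{n×n}, and let x⁺ be a global minimizer over ℝⁿ of the model f̂(y) = ⟨g, y − x⟩ + (1/2)⟨y − x, Ĥ(y − x)⟩ + (α/6)‖y − x‖³. Then (α/36)‖x⁺ − x‖³ ≤ F(x) − F(x⁺) + √(16/(3α)) ‖∇F(x) − g‖^{3/2} + (24/α²) ‖∇²F(x) − Ĥ‖³, where the Hessian difference is measured in spectral norm. -/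

import Mathlib

open scoped BigOperators RealInnerProductSpace

/-- The spectral norm of a real square matrix: the operator norm of the associated
continuous linear endomorphism of Euclidean space. -/
noncomputable def specNorm {n : ℕ} (A : Matrix (Fin n) (Fin n) ℝ) : ℝ :=
  ‖Matrix.toEuclideanCLM (𝕜 := ℝ) A‖

private lemma sum_eq_inner' {n : ℕ} (A : Matrix (Fin n) (Fin n) ℝ)
    (v w : EuclideanSpace ℝ (Fin n)) :
    ∑ i, ∑ j, v i * A i j * w j = ⟪v, (Matrix.toEuclideanCLM (𝕜:=ℝ) A) w⟫ := by
  simp only [PiLp.inner_apply, RCLike.inner_apply, conj_trivial]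
  have h : ∀ i, (Matrix.toEuclideanCLM (𝕜:=ℝ) A) w i = ∑ j, A i j * w j := fun i => rfl
  refine Finset.sum_congr rfl fun i _ => ?_
  rw [h i, Finset.sum_mul]
  exact Finset.sum_congr rfl fun j _ => by ring

private lemma quadBound' {n : ℕ} (A : Matrix (Fin n) (Fin n) ℝ)
    (v w : EuclideanSpace ℝ (Fin n)) :
    |∑ i, ∑ j, v i * A i j * w j| ≤ specNorm A * ‖v‖ * ‖w‖ := by
  rw [sum_eq_inner']
  calc |⟪v, (Matrix.toEuclideanCLM (𝕜:=ℝ) A) w⟫|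
      ≤ ‖v‖ * ‖(Matrix.toEuclideanCLM (𝕜:=ℝ) A) w‖ := abs_real_inner_le_norm _ _
    _ ≤ ‖v‖ * (specNorm A * ‖w‖) := by
        gcongr
        exact (Matrix.toEuclideanCLM (𝕜:=ℝ) A).le_opNorm w
    _ = specNorm A * ‖v‖ * ‖w‖ := by ring

private lemma helperAnti' {g g' : ℝ → ℝ} (hg : ∀ t, HasDerivAt g (g' t) t)
    (hd : ∀ t ∈ Set.Icc (0:ℝ) 1, g' t ≤ 0) : AntitoneOn g (Set.Icc 0 1) := by
  apply antitoneOn_of_deriv_nonpos (convex_Icc 0 1)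
  · exact fun t _ => (hg t).continuousAt.continuousWithinAt
  · exact fun t _ => ((hg t).differentiableAt).differentiableWithinAt
  · intro t ht
    rw [(hg t).deriv]
    rw [interior_Icc] at ht
    exact hd t ⟨ht.1.le, ht.2.le⟩

private lemma young1' (a r α : ℝ) (ha : 0 ≤ a) (hr : 0 ≤ r) (hα : 0 < α) :
    a * r ≤ α/36 * r^3 + Real.sqrt (16/(3*α)) * a ^ ((3:ℝ)/2) := by
  set u := Real.sqrt a with hu
  have hu0 : 0 ≤ u := Real.sqrt_nonneg a
  have hua : u^2 = a := Real.sq_sqrt ha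
  have harp : a ^ ((3:ℝ)/2) = u^3 := by
    rw [hu, Real.sqrt_eq_rpow, ← Real.rpow_natCast (a ^ ((1:ℝ)/2)) 3, ← Real.rpow_mul ha]
    norm_num
  rw [harp]
  set t := Real.sqrt (3*α) with ht
  have ht0 : 0 < t := Real.sqrt_pos.2 (by linarith)
  have ht2 : t^2 = 3*α := Real.sq_sqrt (by linarith)
  have hq : Real.sqrt (16/(3*α)) * t = 4 := by
    rw [ht, ← Real.sqrt_mul (by positivity)]
    rw [div_mul_cancel₀ _ (by positivity : (3:ℝ)*α ≠ 0)]
    rw [show (16:ℝ) = 4^2 by norm_num, Real.sqrt_sq (by norm_num)]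
  have key : 0 ≤ (t*r - 6*u)^2 * (t*r + 12*u) := by positivity
  rw [← sub_nonneg]
  have h2 : (α/36 * r^3 + Real.sqrt (16/(3*α)) * u^3 - a*r) * (108*t) =
      (t*r - 6*u)^2 * (t*r + 12*u) := by
    linear_combination (108*u^3)*hq - (t*r^3)*ht2 + (108*t*r)*hua
  nlinarith [ht0, key, h2]

private lemma gradlem' {n : ℕ} (F : EuclideanSpace ℝ (Fin n) → ℝ) (x v : EuclideanSpace ℝ (Fin n)) :
    ⟪gradient F x, v⟫ = fderiv ℝ F x v := by
  simp [gradient, InnerProductSpace.toDual_symm_apply]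

private lemma young2' (b r α : ℝ) (hb : 0 ≤ b) (hr : 0 ≤ r) (hα : 0 < α) :
    (1/2) * b * r^2 ≤ α/36 * r^3 + 24/α^2 * b^3 := by
  rw [← sub_nonneg]
  have key : 0 ≤ ((α*r - 12*b)^2 * (α*r + 6*b)) := by positivity
  have h2 : (α/36 * r^3 + 24/α^2 * b^3 - (1/2)*b*r^2) * (72 * α^2) =
      2 * ((α*r - 12*b)^2 * (α*r + 6*b)) := by
    field_simp
    ring
  nlinarith [mul_pos (mul_pos (by norm_num : (0:ℝ) < 72) hα) hα]

set_option maxHeartbeats 1000000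

/-- Let `F : ℝⁿ → ℝ` be twice continuously differentiable with `L₂`-Lipschitz
Hessian (where `HF y` is the Hessian matrix of `F` at `y`), and let `α ≥ L₂`, `α > 0`.  Fix `x`,
`g` and a symmetric matrix `Ĥ`, and let `x⁺` be a global minimizer over `ℝⁿ` of the model
`f̂(y) = ⟨g, y−x⟩ + (1/2)⟨y−x, Ĥ(y−x)⟩ + (α/6)‖y−x‖³`.  Then
`(α/36)‖x⁺−x‖³ ≤ F(x) − F(x⁺) + √(16/(3α)) ‖∇F(x) − g‖^{3/2} + (24/α²)‖∇²F(x) − Ĥ‖³`. -/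
theorem statement14 {n : ℕ} (F : EuclideanSpace ℝ (Fin n) → ℝ) (hF : ContDiff ℝ 2 F)
    (HF : EuclideanSpace ℝ (Fin n) → Matrix (Fin n) (Fin n) ℝ)
    (hHF : ∀ (y : EuclideanSpace ℝ (Fin n)) (w₁ w₂ : EuclideanSpace ℝ (Fin n)),
      iteratedFDeriv ℝ 2 F y ![w₁, w₂] = ∑ i, ∑ j, w₁ i * HF y i j * w₂ j)
    (L₂ : ℝ) (hL₂ : 0 ≤ L₂)
    (hLip : ∀ x y : EuclideanSpace ℝ (Fin n), specNorm (HF x - HF y) ≤ L₂ * ‖x - y‖)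
    (α : ℝ) (hα : 0 < α) (hαL : L₂ ≤ α)
    (x g : EuclideanSpace ℝ (Fin n)) (Hhat : Matrix (Fin n) (Fin n) ℝ) (hHhat : Hhat.IsSymm)
    (xplus : EuclideanSpace ℝ (Fin n))
    (hmin : ∀ y : EuclideanSpace ℝ (Fin n),
      (∑ i, g i * (xplus - x) i) +
          (1 / 2) * (∑ i, ∑ j, (xplus - x) i * Hhat i j * (xplus - x) j) +
          (α / 6) * ‖xplus - x‖ ^ 3 ≤
        (∑ i, g i * (y - x) i) + (1 / 2) * (∑ i, ∑ j, (y - x) i * Hhat i j * (y - x) j) +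
          (α / 6) * ‖y - x‖ ^ 3) :
    (α / 36) * ‖xplus - x‖ ^ 3 ≤
      F x - F xplus + Real.sqrt (16 / (3 * α)) * ‖gradient F x - g‖ ^ ((3 : ℝ) / 2) +
        (24 / α ^ 2) * specNorm (HF x - Hhat) ^ 3 := by
  classical
  set s : EuclideanSpace ℝ (Fin n) := xplus - x with hs
  have hxp : x + s = xplus := by rw [hs]; abel
  rcases eq_or_ne xplus x with heq | hne
  · subst heq
    have h0 : s = 0 := by rw [hs]; abel
    rw [h0]
    simp only [norm_zero, sub_self]
    have h1 : (0:ℝ) ≤ Real.sqrt (16 / (3 * α)) * ‖gradient F xplus - g‖ ^ ((3 : ℝ) / 2) := by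
      have := Real.rpow_nonneg (norm_nonneg (gradient F xplus - g)) ((3:ℝ)/2)
      positivity
    have h2 : (0:ℝ) ≤ (24 / α ^ 2) * specNorm (HF xplus - Hhat) ^ 3 := by
      have : (0:ℝ) ≤ specNorm (HF xplus - Hhat) := norm_nonneg _
      positivity
    nlinarith
  -- notation
  set r : ℝ := ‖s‖ with hr
  have hr0 : 0 < r := by
    rw [hr, hs, norm_pos_iff]
    intro h
    exact hne (by rwa [sub_eq_zero] at h)
  set A : ℝ := ∑ i, g i * s i with hA
  set Qh : ℝ := ∑ i, ∑ j, s i * Hhat i j * s j with hQh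
  set Q : EuclideanSpace ℝ (Fin n) → ℝ := fun y => ∑ i, ∑ j, s i * HF y i j * s j with hQ
  set D : ℝ := fderiv ℝ F x s with hD
  set K : ℝ := L₂ * r^3 with hK
  -- scaled model inequality
  have hmin' : ∀ t : ℝ,
      A + (1/2) * Qh + (α/6) * r^3 ≤ t*A + t^2*((1/2)*Qh) + |t|^3 * ((α/6)*r^3) := by
    intro t
    have h := hmin (x + t • s)
    have hys : x + t • s - x = t • s := add_sub_cancel_left x (t • s)
    rw [hys] at h
    have e1 : ∑ i, g i * (t • s) i = t * A := by
      rw [hA, Finset.mul_sum]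
      exact Finset.sum_congr rfl fun i _ => by
        simp [PiLp.smul_apply, smul_eq_mul]; ring
    have e2 : ∑ i, ∑ j, (t • s) i * Hhat i j * (t • s) j = t^2 * Qh := by
      rw [hQh, Finset.mul_sum]
      refine Finset.sum_congr rfl fun i _ => ?_
      rw [Finset.mul_sum]
      refine Finset.sum_congr rfl fun j _ => ?_
      simp [PiLp.smul_apply, smul_eq_mul]; ring
    have e3 : ‖t • s‖ ^ 3 = |t|^3 * r^3 := by
      rw [norm_smul, Real.norm_eq_abs, mul_pow]
    rw [e1, e2, e3] at h
    calc A + (1/2) * Qh + (α/6) * r^3 ≤ t * A + 1/2 * (t^2 * Qh) + α/6 * (|t|^3 * r^3) := h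
    _ = t*A + t^2*((1/2)*Qh) + |t|^3 * ((α/6)*r^3) := by ring
  -- A ≤ 0 by reflection
  have hAneg : A ≤ 0 := by
    have h := hmin' (-1)
    rw [abs_neg, abs_one] at h
    norm_num at h
    linarith
  -- first-order condition along s
  have hfoc : A + Qh + (α/2) * r^3 = 0 := by
    set p : ℝ → ℝ := fun t => t*A + t^2*((1/2)*Qh) + t^3*((α/6)*r^3) with hp
    have hd : HasDerivAt p (1*A + (2*1^1)*((1/2)*Qh) + (3*1^2)*((α/6)*r^3)) 1 := by
      have h1 : HasDerivAt (fun t:ℝ => t*A) (1*A) 1 := (hasDerivAt_id 1).mul_const A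
      have h2 : HasDerivAt (fun t:ℝ => t^2*((1/2)*Qh)) ((2*1^1)*((1/2)*Qh)) 1 := by
        simpa using (hasDerivAt_pow 2 (1:ℝ)).mul_const ((1/2)*Qh)
      have h3 : HasDerivAt (fun t:ℝ => t^3*((α/6)*r^3)) ((3*1^2)*((α/6)*r^3)) 1 := by
        simpa using (hasDerivAt_pow 3 (1:ℝ)).mul_const ((α/6)*r^3)
      exact (h1.add h2).add h3
    have hloc : IsLocalMin p 1 := by
      have h01 : ∀ᶠ t in nhds (1:ℝ), 0 < t := eventually_gt_nhds (by norm_num)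
      filter_upwards [h01] with t ht
      have h := hmin' t
      rw [abs_of_pos ht] at h
      have hp1 : p 1 = A + (1/2)*Qh + (α/6)*r^3 := by rw [hp]; ring_nf
      have hpt : p t = t*A + t^2*((1/2)*Qh) + t^3*((α/6)*r^3) := rfl
      rw [hp1, hpt]
      exact h
    have hz := hloc.deriv_eq_zero
    rw [hd.deriv] at hz
    nlinarith [hz]
  -- model value bound
  have hmodel : A + (1/2) * Qh ≤ -(α/4) * r^3 := by nlinarith [hfoc, hAneg]
  -- Taylor machinery
  have hγ : ∀ t : ℝ, HasDerivAt (fun t : ℝ => x + t • s) s t := by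
    intro t
    simpa using ((hasDerivAt_id t).smul_const s).const_add x
  have hφ : ∀ t : ℝ, HasDerivAt (fun t : ℝ => F (x + t • s)) ((fderiv ℝ F (x + t • s)) s) t := by
    intro t
    exact ((hF.differentiable (by norm_num)).differentiableAt.hasFDerivAt).comp_hasDerivAt t (hγ t)
  have hφ1 : ∀ t : ℝ, HasDerivAt (fun t : ℝ => (fderiv ℝ F (x + t • s)) s)
      (Q (x + t • s)) t := by
    intro t
    have hdF : ContDiff ℝ 1 (fderiv ℝ F) := hF.fderiv_right (by norm_num)
    have h2 : HasFDerivAt (fderiv ℝ F) (fderiv ℝ (fderiv ℝ F) (x + t • s)) (x + t • s) :=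
      (hdF.differentiable (by norm_num)).differentiableAt.hasFDerivAt
    have h3 : HasDerivAt (fun t : ℝ => fderiv ℝ F (x + t • s))
        (fderiv ℝ (fderiv ℝ F) (x + t • s) s) t := h2.comp_hasDerivAt t (hγ t)
    have h4 := h3.clm_apply (hasDerivAt_const t s)
    simp only [map_zero, add_zero] at h4
    have h5 : Q (x + t • s) = iteratedFDeriv ℝ 2 F (x + t • s) ![s, s] := by
      rw [hHF]
    rw [h5, iteratedFDeriv_two_apply]
    simpa using h4
  -- Lipschitz bound on Q along the segment
  have hQdiff : ∀ y : EuclideanSpace ℝ (Fin n), Q y - Q x ≤ specNorm (HF y - HF x) * r * r := by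
    intro y
    have hsum : ∑ i, ∑ j, s i * (HF y - HF x) i j * s j = Q y - Q x := by
      rw [hQ]
      simp only [Matrix.sub_apply]
      rw [← Finset.sum_sub_distrib]
      refine Finset.sum_congr rfl fun i _ => ?_
      rw [← Finset.sum_sub_distrib]
      exact Finset.sum_congr rfl fun j _ => by ring
    have hb := quadBound' (HF y - HF x) s s
    rw [hsum] at hb
    calc Q y - Q x ≤ |Q y - Q x| := le_abs_self _
      _ ≤ specNorm (HF y - HF x) * ‖s‖ * ‖s‖ := hb
      _ = specNorm (HF y - HF x) * r * r := by rw [← hr]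
  have hQle : ∀ t ∈ Set.Icc (0:ℝ) 1, Q (x + t • s) - (Q x + t * K) ≤ 0 := by
    intro t ht
    have h1 := hQdiff (x + t • s)
    have h2 : specNorm (HF (x + t • s) - HF x) ≤ L₂ * (t * r) := by
      have := hLip (x + t • s) x
      have hnn : ‖x + t • s - x‖ = t * r := by
        rw [add_sub_cancel_left, norm_smul, Real.norm_eq_abs, abs_of_nonneg ht.1, hr]
      rwa [hnn] at this
    have h3 : specNorm (HF (x + t • s) - HF x) * r * r ≤ (L₂ * (t * r)) * r * r := by
      have hrpos : (0:ℝ) ≤ r := hr0.le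
      gcongr
    have : Q (x + t • s) - Q x ≤ t * K := by
      calc Q (x + t • s) - Q x ≤ (L₂ * (t * r)) * r * r := le_trans h1 h3
        _ = t * K := by rw [hK]; ring
    linarith
  -- Taylor inequality:  F(x+s) ≤ F x + D + Q x / 2 + K / 6
  set g₁ : ℝ → ℝ := fun t => (fderiv ℝ F (x + t • s)) s - (D + t * Q x + t^2 * (K/2)) with hg₁
  set g₂ : ℝ → ℝ := fun t => F (x + t • s) - (F x + t * D + t^2 * (Q x / 2) + t^3 * (K/6))
    with hg₂
  have hg₁d : ∀ t : ℝ, HasDerivAt g₁ (Q (x + t • s) - (Q x + t * K)) t := by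
    intro t
    have hpoly : HasDerivAt (fun t : ℝ => D + t * Q x + t^2 * (K/2)) (Q x + t * K) t := by
      have h1 : HasDerivAt (fun t:ℝ => t * Q x) (1 * Q x) t := (hasDerivAt_id t).mul_const (Q x)
      have h2 : HasDerivAt (fun t:ℝ => t^2*(K/2)) ((2*t^1)*(K/2)) t :=
        (hasDerivAt_pow 2 t).mul_const (K/2)
      have := (h1.const_add D).add h2
      exact this.congr_deriv (by ring)
    exact (hφ1 t).sub hpoly
  have hg₂d : ∀ t : ℝ, HasDerivAt g₂ (g₁ t) t := by
    intro t
    have hpoly : HasDerivAt (fun t : ℝ => F x + t * D + t^2 * (Q x / 2) + t^3 * (K/6))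
        (D + t * Q x + t^2 * (K/2)) t := by
      have h1 : HasDerivAt (fun t:ℝ => t * D) (1 * D) t := (hasDerivAt_id t).mul_const D
      have h2 : HasDerivAt (fun t:ℝ => t^2*(Q x/2)) ((2*t^1)*(Q x/2)) t :=
        (hasDerivAt_pow 2 t).mul_const (Q x/2)
      have h3 : HasDerivAt (fun t:ℝ => t^3*(K/6)) ((3*t^2)*(K/6)) t :=
        (hasDerivAt_pow 3 t).mul_const (K/6)
      have := ((h1.const_add (F x)).add h2).add h3
      exact this.congr_deriv (by ring)
    exact (hφ t).sub hpoly
  have hg₁0 : g₁ 0 = 0 := by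
    rw [hg₁]
    simp [hD]
  have hg₁le : ∀ t ∈ Set.Icc (0:ℝ) 1, g₁ t ≤ 0 := by
    intro t ht
    have hanti := helperAnti' hg₁d hQle
    have := hanti (Set.left_mem_Icc.2 zero_le_one) ht ht.1
    rw [hg₁0] at this
    exact this
  have hg₂1 : g₂ 1 ≤ 0 := by
    have hanti := helperAnti' hg₂d hg₁le
    have h := hanti (Set.left_mem_Icc.2 zero_le_one) (Set.right_mem_Icc.2 zero_le_one) zero_le_one
    have hg₂0 : g₂ 0 = 0 := by rw [hg₂]; simp
    rw [hg₂0] at h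
    exact h
  have hTaylor : F xplus ≤ F x + D + Q x / 2 + K / 6 := by
    have h := hg₂1
    rw [hg₂] at h
    simp only [one_smul, one_pow, one_mul] at h
    rw [hxp] at h
    linarith
  -- error bounds
  set a : ℝ := ‖gradient F x - g‖ with ha
  set b : ℝ := specNorm (HF x - Hhat) with hb
  have hDg : |D - A| ≤ a * r := by
    have hgrad : ∀ v : EuclideanSpace ℝ (Fin n), ⟪gradient F x, v⟫ = fderiv ℝ F x v :=
      gradlem' F x
    have hAin : A = ⟪g, s⟫ := by
      rw [hA, PiLp.inner_apply]
      simp [RCLike.inner_apply]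
      exact Finset.sum_congr rfl fun i _ => mul_comm _ _
    have hDin : D = ⟪gradient F x, s⟫ := (hgrad s).symm
    have : D - A = ⟪gradient F x - g, s⟫ := by rw [hDin, hAin, inner_sub_left]
    rw [this]
    calc |⟪gradient F x - g, s⟫| ≤ ‖gradient F x - g‖ * ‖s‖ := abs_real_inner_le_norm _ _
      _ = a * r := by rw [← ha, ← hr]
  have hQd : |Q x - Qh| ≤ b * r * r := by
    have hsum : ∑ i, ∑ j, s i * (HF x - Hhat) i j * s j = Q x - Qh := by
      rw [hQ, hQh]
      simp only [Matrix.sub_apply]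
      rw [← Finset.sum_sub_distrib]
      refine Finset.sum_congr rfl fun i _ => ?_
      rw [← Finset.sum_sub_distrib]
      exact Finset.sum_congr rfl fun j _ => by ring
    have hbb := quadBound' (HF x - Hhat) s s
    rw [hsum] at hbb
    calc |Q x - Qh| ≤ specNorm (HF x - Hhat) * ‖s‖ * ‖s‖ := hbb
      _ = b * r * r := by rw [← hb, ← hr]
  -- assemble
  have ha0 : 0 ≤ a := norm_nonneg _
  have hb0 : 0 ≤ b := norm_nonneg _
  have hKb : K ≤ α * r^3 := by
    rw [hK]
    have : (0:ℝ) ≤ r^3 := by positivity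
    nlinarith
  have hmain : F x - F xplus ≥ (α/12) * r^3 - a * r - (1/2) * b * r^2 := by
    have h1 : D ≤ A + a * r := by
      have := abs_le.1 hDg
      linarith [this.2]
    have h2 : Q x ≤ Qh + b * r * r := by
      have := abs_le.1 hQd
      linarith [this.2]
    have h3 : F xplus ≤ F x + (A + a*r) + (Qh + b*r*r)/2 + (α * r^3)/6 := by
      have := hTaylor
      linarith
    nlinarith [hmodel]
  have hy1 := young1' a r α ha0 hr0.le hα
  have hy2 := young2' b r α hb0 hr0.le hα
  have hgoal : (α/36) * r^3 ≤
      F x - F xplus + Real.sqrt (16/(3*α)) * a ^ ((3:ℝ)/2) + 24/α^2 * b^3 := by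
    linarith
  calc (α / 36) * ‖s‖ ^ 3 = (α/36) * r^3 := by rw [← hr]
    _ ≤ F x - F xplus + Real.sqrt (16/(3*α)) * a ^ ((3:ℝ)/2) + 24/α^2 * b^3 := hgoal
    _ = F x - F xplus + Real.sqrt (16 / (3 * α)) * ‖gradient F x - g‖ ^ ((3 : ℝ) / 2) +
        (24 / α ^ 2) * specNorm (HF x - Hhat) ^ 3 := by rw [ha, hb]
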